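/- Let G be a finite group, N a normal subgroup with G = N ⋊ C, and suppose C is nilpotent and self-normalizing in G. Then for any X ≤ C, the number of G-conjugates of C containing X equals |C_N(X)|, and this number divides the number of G-conjugates of C, which is |N|. -/

import Mathlib

open Pointwise


/-- If `G = N ⋊ C` with `C` nilpotent and self-normalizing
(a Carter subgroup), and `X ≤ C`, then the number of `G`-conjugates of `C`
containing `X` equals `|C_N(X)|`, and this number divides the total number of
`G`-conjugates of `C`, which equals `|N|`. -/
theorem stmt_2 {G : Type*} [Group G] [Finite G] (N C X : Subgroup G)
    [N.Normal] (hNC : N ⊔ C = ⊤) (hNC' : N ⊓ C = ⊥)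
    (hnil : Group.IsNilpotent C) (hself : Subgroup.normalizer (C : Set G) = C) (hX : X ≤ C) :
    Nat.card {D : Subgroup G //
        (∃ g : G, D = C.map (MulAut.conj g).toMonoidHom) ∧ X ≤ D} =
      Nat.card (Subgroup.centralizer (X : Set G) ⊓ N : Subgroup G) ∧
    Nat.card {D : Subgroup G //
        (∃ g : G, D = C.map (MulAut.conj g).toMonoidHom) ∧ X ≤ D} ∣
      Nat.card {D : Subgroup G // ∃ g : G, D = C.map (MulAut.conj g).toMonoidHom} ∧
    Nat.card {D : Subgroup G // ∃ g : G, D = C.map (MulAut.conj g).toMonoidHom} =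
      Nat.card N := by
  classical
  have mem_conj : ∀ (g x : G), x ∈ C.map (MulAut.conj g).toMonoidHom ↔ g⁻¹ * x * g ∈ C := by
    intro g x
    rw [Subgroup.mem_map_equiv]
    simp
  -- conjugation by element of C preserves C
  have conj_mem : ∀ c ∈ C, ∀ x : G, (c⁻¹ * x * c ∈ C ↔ x ∈ C) := by
    intro c hc x
    have hc' : c⁻¹ ∈ Subgroup.normalizer (C : Set G) := by rw [hself]; exact inv_mem hc
    rw [Subgroup.mem_normalizer_iff] at hc'
    have := hc' x
    simpa [mul_assoc] using this.symm
  -- injectivity of n ↦ C^n on N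
  have inj : ∀ n ∈ N, ∀ m ∈ N,
      C.map (MulAut.conj n).toMonoidHom = C.map (MulAut.conj m).toMonoidHom → n = m := by
    intro n hn m hm h
    have hx : ∀ x : G, (n⁻¹ * x * n ∈ C ↔ m⁻¹ * x * m ∈ C) := by
      intro x
      rw [← mem_conj n x, ← mem_conj m x, h]
    have hmem : m⁻¹ * n ∈ Subgroup.normalizer (C : Set G) := by
      rw [Subgroup.mem_normalizer_iff]
      intro h'
      have := hx (n * h' * n⁻¹)
      constructor
      · intro hh
        have h1 : m⁻¹ * (n * h' * n⁻¹) * m ∈ C := this.mp (by simpa [mul_assoc] using hh)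
        simpa [mul_assoc, mul_inv_rev] using h1
      · intro hh
        have h1 : m⁻¹ * (n * h' * n⁻¹) * m ∈ C := by
          simpa [mul_assoc, mul_inv_rev] using hh
        simpa [mul_assoc] using this.mpr h1
    have hC : m⁻¹ * n ∈ C := by rw [← hself]; exact hmem
    have hN : m⁻¹ * n ∈ N := mul_mem (inv_mem hm) hn
    have h1 : m⁻¹ * n = 1 := by
      rw [← Subgroup.mem_bot, ← hNC']
      exact ⟨hN, hC⟩
    exact (inv_mul_eq_one.mp h1).symm
  -- every conjugate of C is C^n for some n ∈ N
  have decomp : ∀ g : G, ∃ n ∈ N,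
      C.map (MulAut.conj g).toMonoidHom = C.map (MulAut.conj n).toMonoidHom := by
    intro g
    have hg : g ∈ (N : Set G) * (C : Set G) := by
      rw [← Subgroup.normal_mul, hNC]
      trivial
    obtain ⟨n, hn, c, hc, rfl⟩ := hg
    refine ⟨n, hn, ?_⟩
    ext x
    rw [mem_conj, mem_conj]
    have hcm := conj_mem c hc (n⁻¹ * x * n)
    constructor
    · intro hh
      exact hcm.mp (by simpa [mul_assoc, mul_inv_rev] using hh)
    · intro hh
      have := hcm.mpr hh
      simpa [mul_assoc, mul_inv_rev] using this
  -- the key criterion: X ≤ C^n iff n centralizes X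
  have crit : ∀ n ∈ N,
      (X ≤ C.map (MulAut.conj n).toMonoidHom ↔ n ∈ Subgroup.centralizer (X : Set G)) := by
    intro n hn
    constructor
    · intro hle
      rw [Subgroup.mem_centralizer_iff]
      intro x hx'
      have hxC : x ∈ C := hX hx'
      have h1 : n⁻¹ * x * n ∈ C := (mem_conj n x).mp (hle hx')
      have h2 : x⁻¹ * (n⁻¹ * x * n) ∈ C := mul_mem (inv_mem hxC) h1
      have h3 : x⁻¹ * (n⁻¹ * x * n) ∈ N := by
        have hconj : x⁻¹ * n⁻¹ * x ∈ N := by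
          have := Subgroup.Normal.conj_mem ‹N.Normal› n⁻¹ (inv_mem hn) x⁻¹
          simpa [mul_assoc] using this
        simpa [mul_assoc] using mul_mem hconj hn
      have h4 : x⁻¹ * (n⁻¹ * x * n) = 1 := by
        rw [← Subgroup.mem_bot, ← hNC']
        exact ⟨h3, h2⟩
      have h5 : x = n⁻¹ * x * n := inv_mul_eq_one.mp h4
      have h6 : n * x = x * n := by
        calc n * x = n * (n⁻¹ * x * n) := by rw [← h5]
          _ = x * n := by simp [mul_assoc]
      exact h6.symm
    · intro hc x hx'
      rw [mem_conj]
      rw [Subgroup.mem_centralizer_iff] at hc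
      have hxn : x * n = n * x := hc x hx'
      have : n⁻¹ * x * n = x := by
        rw [mul_assoc, hxn, ← mul_assoc, inv_mul_cancel, one_mul]
      rw [this]
      exact hX hx'
  -- equivalences
  have e3 : (N : Subgroup G) ≃
      {D : Subgroup G // ∃ g : G, D = C.map (MulAut.conj g).toMonoidHom} :=
    Equiv.ofBijective
      (fun n => ⟨C.map (MulAut.conj (n : G)).toMonoidHom, ⟨(n : G), rfl⟩⟩)
      (by
        constructor
        · intro a b hab
          exact Subtype.ext (inj a a.2 b b.2 (congrArg Subtype.val hab))
        · rintro ⟨D, g, rfl⟩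
          obtain ⟨n, hn, h⟩ := decomp g
          exact ⟨⟨n, hn⟩, Subtype.ext h.symm⟩)
  have e1 : (Subgroup.centralizer (X : Set G) ⊓ N : Subgroup G) ≃
      {D : Subgroup G // (∃ g : G, D = C.map (MulAut.conj g).toMonoidHom) ∧ X ≤ D} :=
    Equiv.ofBijective
      (fun n => ⟨C.map (MulAut.conj (n : G)).toMonoidHom, ⟨(n : G), rfl⟩,
        (crit (n : G) (Subgroup.mem_inf.mp n.2).2).mpr (Subgroup.mem_inf.mp n.2).1⟩)
      (by
        constructor
        · intro a b hab
          have hN1 := (Subgroup.mem_inf.mp a.2).2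
          have hN2 := (Subgroup.mem_inf.mp b.2).2
          exact Subtype.ext (inj a hN1 b hN2 (congrArg Subtype.val hab))
        · rintro ⟨D, ⟨g, rfl⟩, hle⟩
          obtain ⟨n, hn, h⟩ := decomp g
          have hle' : X ≤ C.map (MulAut.conj n).toMonoidHom := h ▸ hle
          have hcent := (crit n hn).mp hle'
          exact ⟨⟨n, Subgroup.mem_inf.mpr ⟨hcent, hn⟩⟩, Subtype.ext h.symm⟩)
  have h1 : Nat.card {D : Subgroup G //
      (∃ g : G, D = C.map (MulAut.conj g).toMonoidHom) ∧ X ≤ D} =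
      Nat.card (Subgroup.centralizer (X : Set G) ⊓ N : Subgroup G) :=
    (Nat.card_congr e1).symm
  have h3 : Nat.card {D : Subgroup G // ∃ g : G, D = C.map (MulAut.conj g).toMonoidHom} =
      Nat.card N := (Nat.card_congr e3).symm
  refine ⟨h1, ?_, h3⟩
  rw [h1, h3]
  exact Subgroup.card_dvd_of_le inf_le_right
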